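/- Let $f:\mathbb{R}^d \to \mathbb{R}$ be continuous with $|f(x)| \le C_0(1 + \|x\|^n)$ for some $C_0, n$, and let $\tilde f = f - \int f\, \varphi\, dx$ where $\varphi$ is the invariant Gaussian density of the OU semigroup $T_t$. If additionally $f$ is $C^1$ with polynomially bounded gradient, then there exist constants $C, m > 0$ such that for all $t \ge 1$ and all $x$, $|T_t \tilde f(x)| \le C(1+\|x\|^m) e^{-\mu t}$. -/

import Mathlib

open MeasureTheory Real
open scoped RealInnerProductSpace

section OUAux
variable {d : ℕ}
local notation "E" => EuclideanSpace ℝ (Fin d)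

lemma gauss_integral {b : ℝ} (hb : 0 < b) :
    ∫ v : E, rexp (-b * ‖v‖ ^ 2) = (π / b) ^ ((d : ℝ) / 2) := by
  have h := GaussianFourier.integral_rexp_neg_mul_sq_norm (V := E) hb
  rwa [finrank_euclideanSpace_fin] at h

lemma gauss_integrable {b : ℝ} (hb : 0 < b) :
    Integrable (fun v : E => rexp (-b * ‖v‖ ^ 2)) := by
  have h := GaussianFourier.integrable_cexp_neg_mul_sq_norm_add
      (V := E) (b := (b : ℂ)) (by simpa using hb) 0 0
  refine h.norm.congr (Filter.Eventually.of_forall fun v => ?_)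
  simp [Complex.norm_exp]
  left
  rw [← Complex.ofReal_pow, Complex.ofReal_re]

/-- `(1+q)^m ≤ 2^m (1+q^m)` for `q ≥ 0`. -/
lemma one_add_pow_le {q : ℝ} (hq : 0 ≤ q) (m : ℕ) :
    (1 + q) ^ m ≤ 2 ^ m * (1 + q ^ m) := by
  rcases le_total q 1 with h | h
  · have h1 : (1 + q) ^ m ≤ 2 ^ m := by
      apply pow_le_pow_left₀ (by linarith) (by linarith)
    nlinarith [pow_nonneg hq m, pow_nonneg (by linarith : (0:ℝ) ≤ 2) m]
  · have h1 : (1 + q) ^ m ≤ (2 * q) ^ m := by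
      apply pow_le_pow_left₀ (by linarith) (by linarith)
    have h2 : (2 * q) ^ m = 2 ^ m * q ^ m := by rw [mul_pow]
    nlinarith [pow_nonneg (by linarith : (0:ℝ) ≤ 2) m, pow_nonneg hq m]

lemma gauss_poly_integrable {b : ℝ} (hb : 0 < b) (k : ℕ) :
    Integrable (fun v : E => (1 + ‖v‖ ^ k) * rexp (-b * ‖v‖ ^ 2)) := by
  have hI := (gauss_integrable (d := d) (half_pos hb)).const_mul
      (2 + (k.factorial : ℝ) * (2 / b) ^ k)
  refine hI.mono' ?_ (Filter.Eventually.of_forall fun v => ?_)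
  · exact ((continuous_const.add ((continuous_norm).pow k)).mul
      (Real.continuous_exp.comp
        (continuous_const.mul ((continuous_norm).pow 2)))).aestronglyMeasurable
  · set r := ‖v‖ with hr
    have hr0 : 0 ≤ r := norm_nonneg _
    have key : 1 + r ^ k ≤ (2 + (k.factorial : ℝ) * (2 / b) ^ k) * rexp (b / 2 * r ^ 2) := by
      have e1 : r ^ k ≤ 1 + r ^ (2 * k) := by
        rcases le_total r 1 with h | h
        · have := pow_le_one₀ hr0 h (n := k)
          nlinarith [pow_nonneg hr0 (2 * k)]
        · have : r ^ k ≤ r ^ (2 * k) := pow_le_pow_right₀ h (by omega)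
          linarith
      have e2 : (b / 2 * r ^ 2) ^ k / (k.factorial : ℝ) ≤ rexp (b / 2 * r ^ 2) :=
        Real.pow_div_factorial_le_exp (x := b / 2 * r ^ 2) (by positivity) k
      have e3 : (b / 2 * r ^ 2) ^ k = (b / 2) ^ k * r ^ (2 * k) := by
        rw [mul_pow, ← pow_mul]
      have hfac : (0:ℝ) < (k.factorial : ℝ) := by exact_mod_cast k.factorial_pos
      have e4 : r ^ (2 * k) ≤ (k.factorial : ℝ) * (2 / b) ^ k * rexp (b / 2 * r ^ 2) := by
        rw [div_le_iff₀ hfac] at e2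
        have h5 : (2 / b) ^ k * (b / 2) ^ k = 1 := by
          have : (2 / b) * (b / 2) = 1 := by field_simp
          rw [← mul_pow, this, one_pow]
        calc r ^ (2 * k) = (2 / b) ^ k * ((b / 2) ^ k * r ^ (2 * k)) := by
              rw [← mul_assoc, h5, one_mul]
          _ ≤ (2 / b) ^ k * (rexp (b / 2 * r ^ 2) * (k.factorial : ℝ)) := by
              rw [← e3]; exact mul_le_mul_of_nonneg_left e2 (by positivity)
          _ = (k.factorial : ℝ) * (2 / b) ^ k * rexp (b / 2 * r ^ 2) := by ring
      have e5 : (1:ℝ) ≤ rexp (b / 2 * r ^ 2) := Real.one_le_exp (by positivity)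
      nlinarith
    have hpos : 0 ≤ 1 + r ^ k := by positivity
    rw [Real.norm_eq_abs, abs_of_nonneg (by positivity)]
    calc (1 + r ^ k) * rexp (-b * r ^ 2)
        ≤ ((2 + (k.factorial : ℝ) * (2 / b) ^ k) * rexp (b / 2 * r ^ 2)) * rexp (-b * r ^ 2) := by
          gcongr
      _ = (2 + (k.factorial : ℝ) * (2 / b) ^ k) * rexp (-(b / 2) * r ^ 2) := by
          rw [mul_assoc, ← Real.exp_add, show b / 2 * r ^ 2 + -b * r ^ 2 = -(b / 2) * r ^ 2 by ring]

lemma comp_gauss_integrable {f : E → ℝ} (hfc : Continuous f) {C₀ : ℝ} {n : ℕ}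
    (hgrow : ∀ x, |f x| ≤ C₀ * (1 + ‖x‖ ^ n)) {b : ℝ} (hb : 0 < b) (w : E) (r : ℝ) :
    Integrable (fun y : E => f (w + r • y) * rexp (-b * ‖y‖ ^ 2)) := by
  have hC₀ : 0 ≤ C₀ := by
    have h0 := hgrow 0
    have h2 : ‖(0:E)‖ ^ n ≤ 1 := by rw [norm_zero]; exact zero_pow_le_one n
    nlinarith [abs_nonneg (f 0), pow_nonneg (norm_nonneg (0:E)) n]
  set A : ℝ := ‖w‖ + |r| + 1 with hA
  have hA1 : (1:ℝ) ≤ A := by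
    have := norm_nonneg w; have := abs_nonneg r; simp only [hA]; linarith
  set C₂ : ℝ := C₀ * (1 + A ^ n * 2 ^ n) with hC₂
  have hbnd : ∀ y : E, |f (w + r • y)| ≤ C₂ * (1 + ‖y‖ ^ n) := by
    intro y
    have h1 : ‖w + r • y‖ ≤ A * (1 + ‖y‖) := by
      calc ‖w + r • y‖ ≤ ‖w‖ + ‖r • y‖ := norm_add_le _ _
        _ = ‖w‖ + |r| * ‖y‖ := by rw [norm_smul, Real.norm_eq_abs]
        _ ≤ A * (1 + ‖y‖) := by
            have hy := norm_nonneg y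
            have h2 : |r| * ‖y‖ ≤ A * ‖y‖ := by
              apply mul_le_mul_of_nonneg_right _ hy; simp only [hA]; linarith [norm_nonneg w]
            nlinarith [norm_nonneg w, abs_nonneg r]
    have h2 : ‖w + r • y‖ ^ n ≤ A ^ n * (2 ^ n * (1 + ‖y‖ ^ n)) := by
      calc ‖w + r • y‖ ^ n ≤ (A * (1 + ‖y‖)) ^ n :=
            pow_le_pow_left₀ (norm_nonneg _) h1 n
        _ = A ^ n * (1 + ‖y‖) ^ n := mul_pow _ _ _
        _ ≤ A ^ n * (2 ^ n * (1 + ‖y‖ ^ n)) := by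
            apply mul_le_mul_of_nonneg_left (one_add_pow_le (norm_nonneg y) n) (by positivity)
    calc |f (w + r • y)| ≤ C₀ * (1 + ‖w + r • y‖ ^ n) := hgrow _
      _ ≤ C₀ * (1 + A ^ n * (2 ^ n * (1 + ‖y‖ ^ n))) := by
          apply mul_le_mul_of_nonneg_left _ hC₀; linarith
      _ ≤ C₂ * (1 + ‖y‖ ^ n) := by
          simp only [hC₂]
          have hp : (0:ℝ) ≤ ‖y‖ ^ n := by positivity
          have hq : (0:ℝ) ≤ A ^ n * 2 ^ n := by positivity
          nlinarith
  refine ((gauss_poly_integrable hb n).const_mul C₂).mono' ?_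
      (Filter.Eventually.of_forall fun y => ?_)
  · exact ((hfc.comp (continuous_const.add (continuous_id.const_smul r))).mul
      (Real.continuous_exp.comp
        (continuous_const.mul (continuous_norm.pow 2)))).aestronglyMeasurable
  · rw [Real.norm_eq_abs, abs_mul, abs_of_pos (Real.exp_pos _), ← mul_assoc]
    exact mul_le_mul_of_nonneg_right (hbnd y) (Real.exp_pos _).le

lemma keyexp {b c s : ℝ} (hs : 0 < s) (hcs : c ^ 2 + s ^ 2 = 1) (z g : E) :
    rexp (-(b / s ^ 2) * ‖z - c • g‖ ^ 2) * rexp (-b * ‖g‖ ^ 2)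
      = rexp (-b * ‖z‖ ^ 2) * rexp (-(b / s ^ 2) * ‖g - c • z‖ ^ 2) := by
  rw [← Real.exp_add, ← Real.exp_add]
  congr 1
  have hs2 : (s:ℝ) ^ 2 ≠ 0 := by positivity
  have hz : ‖z - c • g‖ ^ 2 = ‖z‖ ^ 2 - 2 * (c * ⟪z, g⟫) + c ^ 2 * ‖g‖ ^ 2 := by
    rw [norm_sub_sq_real, real_inner_smul_right, norm_smul, Real.norm_eq_abs, mul_pow, sq_abs]
  have hg : ‖g - c • z‖ ^ 2 = ‖g‖ ^ 2 - 2 * (c * ⟪z, g⟫) + c ^ 2 * ‖z‖ ^ 2 := by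
    rw [norm_sub_sq_real, real_inner_smul_right, real_inner_comm, norm_smul, Real.norm_eq_abs,
      mul_pow, sq_abs]
  have hb' : (b / s ^ 2) * c ^ 2 + b = b / s ^ 2 := by
    field_simp
    linear_combination b * hcs
  rw [hz, hg]
  linear_combination (‖z‖ ^ 2 - ‖g‖ ^ 2) * hb'

lemma conv_identity {f : E → ℝ} (hfc : Continuous f) {C₀ : ℝ} {n : ℕ}
    (hgrow : ∀ x, |f x| ≤ C₀ * (1 + ‖x‖ ^ n)) {b c s : ℝ} (hb : 0 < b)
    (hc : 0 < c) (hs : 0 < s) (hcs : c ^ 2 + s ^ 2 = 1) :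
    ∫ g : E, (∫ y : E, f (c • g + s • y) * rexp (-b * ‖y‖ ^ 2)) * rexp (-b * ‖g‖ ^ 2)
      = (π / b) ^ ((d : ℝ) / 2) * ∫ z : E, f z * rexp (-b * ‖z‖ ^ 2) := by
  have hs2 : (0:ℝ) < s ^ 2 := by positivity
  have hb' : 0 < b / s ^ 2 := by positivity
  have hsd : (0:ℝ) < s ^ d := by positivity
  -- Step A : rewrite the inner integral via scaling and translation
  have stepA : ∀ g : E, (∫ y : E, f (c • g + s • y) * rexp (-b * ‖y‖ ^ 2))
      = (s ^ d)⁻¹ * ∫ z : E, f z * rexp (-(b / s ^ 2) * ‖z - c • g‖ ^ 2) := by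
    intro g
    have e1 : (fun y : E => f (c • g + s • y) * rexp (-b * ‖y‖ ^ 2))
        = fun y : E => (fun u : E => f (c • g + u) * rexp (-(b / s ^ 2) * ‖u‖ ^ 2)) (s • y) := by
      funext y
      simp only
      congr 2
      rw [norm_smul, Real.norm_eq_abs, mul_pow, sq_abs]
      field_simp
    rw [e1, MeasureTheory.Measure.integral_comp_smul_of_nonneg (volume : Measure E)
      (fun u : E => f (c • g + u) * rexp (-(b / s ^ 2) * ‖u‖ ^ 2)) s (hR := hs.le),
      finrank_euclideanSpace_fin]
    have e2 : ∫ z : E, f z * rexp (-(b / s ^ 2) * ‖z - c • g‖ ^ 2)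
        = ∫ u : E, f (c • g + u) * rexp (-(b / s ^ 2) * ‖u‖ ^ 2) := by
      rw [← integral_sub_right_eq_self
        (fun u : E => f (c • g + u) * rexp (-(b / s ^ 2) * ‖u‖ ^ 2)) (c • g)]
      congr 1; funext z
      congr 2
      abel
    rw [← e2, smul_eq_mul]
  -- integrability on the product space
  have hWmeas : AEStronglyMeasurable
      (Function.uncurry fun g z : E =>
        (f z * rexp (-b * ‖z‖ ^ 2)) * rexp (-(b / s ^ 2) * ‖g - c • z‖ ^ 2))
      ((volume : Measure E).prod volume) := by
    apply Continuous.aestronglyMeasurable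
    apply Continuous.mul
    · exact (hfc.comp continuous_snd).mul (Real.continuous_exp.comp
        (continuous_const.mul ((continuous_norm.comp continuous_snd).pow 2)))
    · exact Real.continuous_exp.comp (continuous_const.mul
        (((continuous_fst.sub (continuous_snd.const_smul c)).norm).pow 2))
  have hfint : Integrable (fun z : E => f z * rexp (-b * ‖z‖ ^ 2)) := by
    have h := comp_gauss_integrable hfc hgrow hb (0 : E) (1 : ℝ)
    simpa using h
  have hW : Integrable
      (Function.uncurry fun g z : E =>
        (f z * rexp (-b * ‖z‖ ^ 2)) * rexp (-(b / s ^ 2) * ‖g - c • z‖ ^ 2))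
      ((volume : Measure E).prod volume) := by
    rw [integrable_prod_iff' hWmeas]
    constructor
    · refine Filter.Eventually.of_forall fun z => ?_
      simp only [Function.uncurry_apply_pair]
      exact ((gauss_integrable hb').comp_sub_right (c • z)).const_mul _
    · simp only [Function.uncurry_apply_pair]
      have heq : ∀ z : E,
          (∫ g : E, ‖(f z * rexp (-b * ‖z‖ ^ 2)) * rexp (-(b / s ^ 2) * ‖g - c • z‖ ^ 2)‖)
          = (π / (b / s ^ 2)) ^ ((d : ℝ) / 2) * |f z * rexp (-b * ‖z‖ ^ 2)| := by
        intro z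
        have e3 : ∀ g : E, ‖(f z * rexp (-b * ‖z‖ ^ 2)) * rexp (-(b / s ^ 2) * ‖g - c • z‖ ^ 2)‖
            = |f z * rexp (-b * ‖z‖ ^ 2)| * rexp (-(b / s ^ 2) * ‖g - c • z‖ ^ 2) := fun g => by
          rw [Real.norm_eq_abs, abs_mul, abs_of_pos (Real.exp_pos _)]
        simp_rw [e3]
        rw [integral_const_mul,
          integral_sub_right_eq_self (fun v : E => rexp (-(b / s ^ 2) * ‖v‖ ^ 2)) (c • z),
          gauss_integral hb', mul_comm]
      simp only [heq]
      refine (hfint.norm.const_mul ((π / (b / s ^ 2)) ^ ((d : ℝ) / 2))).congr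
        (Filter.Eventually.of_forall fun z => ?_)
      simp only [Real.norm_eq_abs]
  -- main computation
  have main : ∫ g : E, (∫ z : E, f z * rexp (-(b / s ^ 2) * ‖z - c • g‖ ^ 2))
        * rexp (-b * ‖g‖ ^ 2)
      = (π / (b / s ^ 2)) ^ ((d : ℝ) / 2) * ∫ z : E, f z * rexp (-b * ‖z‖ ^ 2) := by
    have step1 : ∀ g : E,
        (∫ z : E, f z * rexp (-(b / s ^ 2) * ‖z - c • g‖ ^ 2)) * rexp (-b * ‖g‖ ^ 2)
        = ∫ z : E, (f z * rexp (-b * ‖z‖ ^ 2)) * rexp (-(b / s ^ 2) * ‖g - c • z‖ ^ 2) := by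
      intro g
      rw [← integral_mul_const]
      congr 1; funext z
      rw [mul_assoc, keyexp hs hcs z g, ← mul_assoc]
    simp_rw [step1]
    rw [integral_integral_swap hW]
    have step2 : ∀ z : E,
        (∫ g : E, (f z * rexp (-b * ‖z‖ ^ 2)) * rexp (-(b / s ^ 2) * ‖g - c • z‖ ^ 2))
        = (f z * rexp (-b * ‖z‖ ^ 2)) * (π / (b / s ^ 2)) ^ ((d : ℝ) / 2) := by
      intro z
      rw [integral_const_mul,
        integral_sub_right_eq_self (fun v : E => rexp (-(b / s ^ 2) * ‖v‖ ^ 2)) (c • z),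
        gauss_integral hb']
    simp_rw [step2]
    rw [integral_mul_const, mul_comm]
  simp_rw [stepA, mul_assoc, integral_const_mul]
  rw [main, ← mul_assoc]
  congr 1
  -- scalar algebra : (s^d)⁻¹ * (π s²/b)^{d/2} = (π/b)^{d/2}
  have h1 : π / (b / s ^ 2) = (π / b) * s ^ 2 := by field_simp
  have h2 : ((s : ℝ) ^ 2) ^ ((d : ℝ) / 2) = s ^ d := by
    rw [← Real.rpow_natCast s 2, ← Real.rpow_mul hs.le, ← Real.rpow_natCast s d]
    congr 1
    push_cast
    ring
  rw [h1, Real.mul_rpow (by positivity) (by positivity), h2]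
  field_simp

lemma real_poly_bound (n₁ : ℕ) {a b' c' u : ℝ} (ha : 0 ≤ a) (hb : 0 ≤ b') (hc : 0 ≤ c')
    (hu : 0 ≤ u) (hub : u ≤ a + b') :
    (1 + (a + b' + c') ^ n₁) * u
      ≤ (2 * 8 ^ (n₁ + 1)) *
        ((1 + a ^ (n₁ + 1)) * ((1 + c' ^ (n₁ + 1)) * (1 + b' ^ (n₁ + 1)))) := by
  set m := n₁ + 1 with hm
  set R := a + b' + c' with hR
  have hR0 : 0 ≤ R := by positivity
  have h1 : 1 + R ^ n₁ ≤ 2 * (1 + R) ^ n₁ := by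
    have e1 : R ^ n₁ ≤ (1 + R) ^ n₁ := pow_le_pow_left₀ hR0 (by linarith) n₁
    have e2 : (1:ℝ) ≤ (1 + R) ^ n₁ := one_le_pow₀ (by linarith)
    linarith
  have h2 : u ≤ 1 + R := by simp only [hR]; linarith
  have h3 : 1 + R ≤ (1 + a) * ((1 + c') * (1 + b')) := by
    rw [hR]
    nlinarith [mul_nonneg hc hb, mul_nonneg ha hc, mul_nonneg ha hb,
      mul_nonneg (mul_nonneg ha hc) hb]
  calc (1 + R ^ n₁) * u ≤ (2 * (1 + R) ^ n₁) * (1 + R) :=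
        mul_le_mul h1 h2 hu (by positivity)
    _ = 2 * (1 + R) ^ m := by rw [hm, pow_succ]; ring
    _ ≤ 2 * ((1 + a) ^ m * ((1 + c') ^ m * (1 + b') ^ m)) := by
        have e3 := pow_le_pow_left₀ (by positivity) h3 m
        rw [mul_pow, mul_pow] at e3
        linarith
    _ ≤ 2 * ((2 ^ m * (1 + a ^ m)) * ((2 ^ m * (1 + c' ^ m)) * (2 ^ m * (1 + b' ^ m)))) := by
        have ea := one_add_pow_le ha m
        have eb := one_add_pow_le hb m
        have ec := one_add_pow_le hc m
        have pa : (0:ℝ) ≤ (1 + a) ^ m := by positivity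
        have pb : (0:ℝ) ≤ (1 + b') ^ m := by positivity
        have pc : (0:ℝ) ≤ (1 + c') ^ m := by positivity
        have qa : (0:ℝ) ≤ 2 ^ m * (1 + a ^ m) := by positivity
        have qb : (0:ℝ) ≤ 2 ^ m * (1 + b' ^ m) := by positivity
        have qc : (0:ℝ) ≤ 2 ^ m * (1 + c' ^ m) := by positivity
        have step : (1 + c') ^ m * (1 + b') ^ m
            ≤ (2 ^ m * (1 + c' ^ m)) * (2 ^ m * (1 + b' ^ m)) :=
          mul_le_mul ec eb pb qc
        have step2 : (1 + a) ^ m * ((1 + c') ^ m * (1 + b') ^ m)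
            ≤ (2 ^ m * (1 + a ^ m)) * ((2 ^ m * (1 + c' ^ m)) * (2 ^ m * (1 + b' ^ m))) :=
          mul_le_mul ea step (by positivity) qa
        linarith
    _ = (2 * 8 ^ m) * ((1 + a ^ m) * ((1 + c' ^ m) * (1 + b' ^ m))) := by
        have e8 : (8:ℝ) ^ m = 2 ^ m * (2 ^ m * 2 ^ m) := by
          rw [← mul_pow, ← mul_pow]; norm_num
        rw [e8]; ring

lemma mvt_bound {f : E → ℝ} (hf1 : ContDiff ℝ 1 f) {C₁ : ℝ} {n₁ : ℕ} (hC₁ : 0 ≤ C₁)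
    (hgrad : ∀ x, ‖fderiv ℝ f x‖ ≤ C₁ * (1 + ‖x‖ ^ n₁))
    {c s : ℝ} (hc0 : 0 ≤ c) (hc1 : c ≤ 1) (hs0 : 0 ≤ s) (hs1 : s ≤ 1) (x g y : E) :
    |f (c • x + s • y) - f (c • g + s • y)|
      ≤ (C₁ * (2 * 8 ^ (n₁ + 1))) *
        ((1 + ‖x‖ ^ (n₁ + 1)) * ((1 + ‖y‖ ^ (n₁ + 1)) * (1 + ‖g‖ ^ (n₁ + 1)))) * c := by
  set R := ‖x‖ + ‖g‖ + ‖y‖ with hRdef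
  have hR0 : 0 ≤ R := by positivity
  have habs : |c| ≤ 1 := abs_le.2 ⟨by linarith, hc1⟩
  have habs' : |s| ≤ 1 := abs_le.2 ⟨by linarith, hs1⟩
  have hmemkey : ∀ w : E, ‖c • w + s • y‖ ≤ ‖w‖ + ‖y‖ := by
    intro w
    calc ‖c • w + s • y‖ ≤ ‖c • w‖ + ‖s • y‖ := norm_add_le _ _
      _ = |c| * ‖w‖ + |s| * ‖y‖ := by
          rw [norm_smul, norm_smul, Real.norm_eq_abs, Real.norm_eq_abs]
      _ ≤ ‖w‖ + ‖y‖ := by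
          have e1 : |c| * ‖w‖ ≤ ‖w‖ := mul_le_of_le_one_left (norm_nonneg w) habs
          have e2 : |s| * ‖y‖ ≤ ‖y‖ := mul_le_of_le_one_left (norm_nonneg y) habs'
          linarith
  have hmem1 : c • x + s • y ∈ Metric.closedBall (0 : E) R := by
    rw [Metric.mem_closedBall, dist_zero_right]
    have := hmemkey x
    rw [hRdef]
    linarith [norm_nonneg g]
  have hmem2 : c • g + s • y ∈ Metric.closedBall (0 : E) R := by
    rw [Metric.mem_closedBall, dist_zero_right]
    have := hmemkey g
    rw [hRdef]
    linarith [norm_nonneg x]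
  have hmvt := (convex_closedBall (0 : E) R).norm_image_sub_le_of_norm_fderiv_le
    (f := f) (C := C₁ * (1 + R ^ n₁)) (fun z _ => (hf1.differentiable one_ne_zero).differentiableAt)
    (fun z hz => by
      refine (hgrad z).trans ?_
      have hzR : ‖z‖ ≤ R := by
        rw [Metric.mem_closedBall, dist_zero_right] at hz; exact hz
      have : ‖z‖ ^ n₁ ≤ R ^ n₁ := pow_le_pow_left₀ (norm_nonneg _) hzR n₁
      nlinarith)
    hmem2 hmem1
  have hnorm : ‖(c • x + s • y) - (c • g + s • y)‖ = c * ‖x - g‖ := by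
    have e : (c • x + s • y) - (c • g + s • y) = c • (x - g) := by
      rw [smul_sub]; abel
    rw [e, norm_smul, Real.norm_eq_abs, abs_of_nonneg hc0]
  rw [Real.norm_eq_abs] at hmvt
  have key := real_poly_bound n₁ (a := ‖x‖) (b' := ‖g‖) (c' := ‖y‖)
    (norm_nonneg x) (norm_nonneg g) (norm_nonneg y) (norm_nonneg (x - g))
    ((norm_sub_le x g))
  calc |f (c • x + s • y) - f (c • g + s • y)|
      ≤ C₁ * (1 + R ^ n₁) * (c * ‖x - g‖) := by rw [← hnorm]; exact hmvt
    _ = C₁ * ((1 + R ^ n₁) * ‖x - g‖) * c := by ring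
    _ ≤ C₁ * ((2 * 8 ^ (n₁ + 1)) *
          ((1 + ‖x‖ ^ (n₁ + 1)) * ((1 + ‖y‖ ^ (n₁ + 1)) * (1 + ‖g‖ ^ (n₁ + 1))))) * c := by
        apply mul_le_mul_of_nonneg_right _ hc0
        exact mul_le_mul_of_nonneg_left key hC₁
    _ = (C₁ * (2 * 8 ^ (n₁ + 1))) *
          ((1 + ‖x‖ ^ (n₁ + 1)) * ((1 + ‖y‖ ^ (n₁ + 1)) * (1 + ‖g‖ ^ (n₁ + 1)))) * c := by
        ring

end OUAux

open MeasureTheory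

set_option maxHeartbeats 2000000 in
/-- Exponential decay of the OU semigroup applied to a centered function of polynomial
growth (with polynomially bounded gradient): `|T_t f̃ (x)| ≤ C (1+‖x‖^m) e^{-μ t}` for `t ≥ 1`. -/
theorem OU_semigroup_decay
    {d : ℕ} (μ σ : ℝ) (hμ : 0 < μ) (hσ : 0 < σ)
    (φ : EuclideanSpace ℝ (Fin d) → ℝ)
    (hφ : ∀ y, φ y = (μ / (Real.pi * σ ^ 2)) ^ ((d : ℝ) / 2) *
      Real.exp (-(μ / σ ^ 2) * ‖y‖ ^ 2))
    (T : ℝ → (EuclideanSpace ℝ (Fin d) → ℝ) → EuclideanSpace ℝ (Fin d) → ℝ)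
    (hT : ∀ t f x, T t f x =
      ∫ y, f (Real.exp (-μ * t) • x + Real.sqrt (1 - Real.exp (-2 * μ * t)) • y) * φ y)
    (f : EuclideanSpace ℝ (Fin d) → ℝ) (hfc : Continuous f)
    (C₀ : ℝ) (n : ℕ) (hgrow : ∀ x, |f x| ≤ C₀ * (1 + ‖x‖ ^ n))
    (hf1 : ContDiff ℝ 1 f)
    (hgrad : ∃ (C₁ : ℝ) (n₁ : ℕ), ∀ x, ‖fderiv ℝ f x‖ ≤ C₁ * (1 + ‖x‖ ^ n₁)) :
    ∃ (C : ℝ) (m : ℕ), 0 < C ∧ 0 < m ∧ ∀ t ≥ (1:ℝ), ∀ x,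
      |T t (fun y => f y - ∫ z, f z * φ z) x|
        ≤ C * (1 + ‖x‖ ^ m) * Real.exp (-μ * t) := by
  classical
  obtain ⟨C₁, n₁, hgrad⟩ := hgrad
  have hπ : 0 < Real.pi := Real.pi_pos
  -- notation for the Gaussian parameters
  set a : ℝ := μ / σ ^ 2 with hadef
  have ha : 0 < a := by positivity
  set K : ℝ := (μ / (Real.pi * σ ^ 2)) ^ ((d : ℝ) / 2) with hKdef
  have hK0 : 0 ≤ K := by positivity
  have hφ' : ∀ y, φ y = K * rexp (-a * ‖y‖ ^ 2) := fun y => hφ y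
  have hφpos : ∀ y, 0 ≤ φ y := fun y => by
    rw [hφ' y]; positivity
  have hφc : Continuous φ := by
    have : Continuous fun y : (EuclideanSpace ℝ (Fin d)) => K * rexp (-a * ‖y‖ ^ 2) :=
      continuous_const.mul (Real.continuous_exp.comp (continuous_const.mul
        (continuous_norm.pow 2)))
    exact this.congr fun y => (hφ' y).symm
  have hKnorm : K * (Real.pi / a) ^ ((d : ℝ) / 2) = 1 := by
    have h1 : μ / (Real.pi * σ ^ 2) = a / Real.pi := by
      rw [hadef, div_div, mul_comm]
    rw [hKdef, h1, ← Real.mul_rpow (by positivity) (by positivity),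
      show a / Real.pi * (Real.pi / a) = 1 by field_simp]
    exact Real.one_rpow _
  have hφint : Integrable φ := by
    refine ((gauss_integrable (d := d) ha).const_mul K).congr
      (Filter.Eventually.of_forall fun y => ?_)
    beta_reduce
    exact (hφ' y).symm
  have hφtot : ∫ y : (EuclideanSpace ℝ (Fin d)), φ y = 1 := by
    calc ∫ y : (EuclideanSpace ℝ (Fin d)), φ y = ∫ y : (EuclideanSpace ℝ (Fin d)), K * rexp (-a * ‖y‖ ^ 2) := by
          congr 1; funext y; exact hφ' y
      _ = K * ∫ y : (EuclideanSpace ℝ (Fin d)), rexp (-a * ‖y‖ ^ 2) := integral_const_mul _ _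
      _ = 1 := by rw [gauss_integral (d := d) ha, hKnorm]
  -- basic positivity of the constants
  have hC₀ : 0 ≤ C₀ := by
    have h0 := hgrow 0
    have h2 : ‖(0:(EuclideanSpace ℝ (Fin d)))‖ ^ n ≤ 1 := by rw [norm_zero]; exact zero_pow_le_one n
    nlinarith [abs_nonneg (f 0), pow_nonneg (norm_nonneg (0:(EuclideanSpace ℝ (Fin d)))) n]
  have hC₁ : 0 ≤ C₁ := by
    have h0 := hgrad 0
    have h2 : ‖(0:(EuclideanSpace ℝ (Fin d)))‖ ^ n₁ ≤ 1 := by rw [norm_zero]; exact zero_pow_le_one n₁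
    nlinarith [norm_nonneg (fderiv ℝ f 0), pow_nonneg (norm_nonneg (0:(EuclideanSpace ℝ (Fin d)))) n₁]
  set m : ℕ := n₁ + 1 with hmdef
  set C₂ : ℝ := C₁ * (2 * 8 ^ m) with hC₂def
  have hC₂ : 0 ≤ C₂ := by positivity
  set C₄ : ℝ := C₀ * (1 + 4 ^ n) with hC₄def
  have hC₄ : 0 ≤ C₄ := by positivity
  -- moments of the Gaussian measure
  set Mm : ℝ := ∫ y : (EuclideanSpace ℝ (Fin d)), (1 + ‖y‖ ^ m) * φ y with hMmdef
  have hMmint : Integrable (fun y : (EuclideanSpace ℝ (Fin d)) => (1 + ‖y‖ ^ m) * φ y) := by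
    refine ((gauss_poly_integrable (d := d) ha m).const_mul K).congr
      (Filter.Eventually.of_forall fun y => ?_)
    beta_reduce
    rw [hφ' y]; ring
  have hMm0 : 0 ≤ Mm := integral_nonneg fun y =>
    mul_nonneg (by positivity) (hφpos y)
  set Mn : ℝ := ∫ y : (EuclideanSpace ℝ (Fin d)), (1 + ‖y‖ ^ n) * φ y with hMndef
  have hMnint : Integrable (fun y : (EuclideanSpace ℝ (Fin d)) => (1 + ‖y‖ ^ n) * φ y) := by
    refine ((gauss_poly_integrable (d := d) ha n).const_mul K).congr
      (Filter.Eventually.of_forall fun y => ?_)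
    beta_reduce
    rw [hφ' y]; ring
  have hMn0 : 0 ≤ Mn := integral_nonneg fun y =>
    mul_nonneg (by positivity) (hφpos y)
  refine ⟨C₂ * Mm * Mm + 1, m, by positivity, Nat.succ_pos n₁, fun t ht x => ?_⟩
  -- the time-dependent coefficients
  set c : ℝ := rexp (-μ * t) with hcdef
  set s : ℝ := Real.sqrt (1 - rexp (-2 * μ * t)) with hsdef
  have hc0 : 0 < c := Real.exp_pos _
  have hc1 : c < 1 := by
    rw [hcdef]
    apply Real.exp_lt_one_iff.mpr
    nlinarith
  have hc2 : rexp (-2 * μ * t) = c ^ 2 := by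
    rw [hcdef, sq, ← Real.exp_add]; congr 1; ring
  have h1c : 0 < 1 - c ^ 2 := by nlinarith
  have hs2 : s ^ 2 = 1 - c ^ 2 := by
    rw [hsdef, hc2, Real.sq_sqrt h1c.le]
  have hs0 : 0 < s := by
    rw [hsdef]
    apply Real.sqrt_pos.mpr
    rw [hc2]; linarith
  have hcs : c ^ 2 + s ^ 2 = 1 := by rw [hs2]; ring
  have hs1 : s ≤ 1 := by nlinarith [sq_nonneg c]
  -- abbreviation for the centered integral
  set I₀ : ℝ := ∫ z, f z * φ z with hI₀def
  -- rewrite T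
  rw [hT]
  -- P w = T_t f (w)
  set P : (EuclideanSpace ℝ (Fin d)) → ℝ := fun w => ∫ y, f (c • w + s • y) * φ y with hPdef
  have hint1 : ∀ w : (EuclideanSpace ℝ (Fin d)), Integrable (fun y : (EuclideanSpace ℝ (Fin d)) => f (c • w + s • y) * φ y) := by
    intro w
    refine ((comp_gauss_integrable hfc hgrow ha (c • w) s).const_mul K).congr
      (Filter.Eventually.of_forall fun y => ?_)
    beta_reduce
    rw [hφ' y]; ring
  -- T_t f̃ (x) = P x - I₀
  have heq1 : ∫ y, (f (c • x + s • y) - I₀) * φ y = P x - I₀ := by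
    have e1 : ∀ y : (EuclideanSpace ℝ (Fin d)), (f (c • x + s • y) - I₀) * φ y
        = f (c • x + s • y) * φ y - I₀ * φ y := fun y => by ring
    calc ∫ y, (f (c • x + s • y) - I₀) * φ y
        = ∫ y, (f (c • x + s • y) * φ y - I₀ * φ y) := by
          congr 1; funext y; exact e1 y
      _ = (∫ y, f (c • x + s • y) * φ y) - ∫ y, I₀ * φ y :=
          integral_sub (hint1 x) (hφint.const_mul I₀)
      _ = P x - I₀ := by rw [integral_const_mul, hφtot, mul_one]
  -- uniform polynomial growth bound for the composed function
  have habsc : |c| ≤ 1 := abs_le.2 ⟨by linarith, hc1.le⟩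
  have habss : |s| ≤ 1 := abs_le.2 ⟨by linarith, hs1⟩
  have hmemkey : ∀ u v : (EuclideanSpace ℝ (Fin d)), ‖c • u + s • v‖ ≤ ‖u‖ + ‖v‖ := by
    intro u v
    calc ‖c • u + s • v‖ ≤ ‖c • u‖ + ‖s • v‖ := norm_add_le _ _
      _ = |c| * ‖u‖ + |s| * ‖v‖ := by
          rw [norm_smul, norm_smul, Real.norm_eq_abs, Real.norm_eq_abs]
      _ ≤ ‖u‖ + ‖v‖ := by
          have e1 : |c| * ‖u‖ ≤ ‖u‖ := mul_le_of_le_one_left (norm_nonneg u) habsc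
          have e2 : |s| * ‖v‖ ≤ ‖v‖ := mul_le_of_le_one_left (norm_nonneg v) habss
          linarith
  have hfble : ∀ u v : (EuclideanSpace ℝ (Fin d)), |f (c • u + s • v)| ≤ C₄ * ((1 + ‖u‖ ^ n) * (1 + ‖v‖ ^ n)) := by
    intro u v
    have h1 : ‖c • u + s • v‖ ^ n ≤ (‖u‖ + ‖v‖) ^ n :=
      pow_le_pow_left₀ (norm_nonneg _) (hmemkey u v) n
    have h2 : (‖u‖ + ‖v‖) ≤ (1 + ‖u‖) * (1 + ‖v‖) := by
      nlinarith [norm_nonneg u, norm_nonneg v, mul_nonneg (norm_nonneg u) (norm_nonneg v)]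
    have h3 : (‖u‖ + ‖v‖) ^ n ≤ (1 + ‖u‖) ^ n * (1 + ‖v‖) ^ n := by
      calc (‖u‖ + ‖v‖) ^ n ≤ ((1 + ‖u‖) * (1 + ‖v‖)) ^ n :=
            pow_le_pow_left₀ (by positivity) h2 n
        _ = (1 + ‖u‖) ^ n * (1 + ‖v‖) ^ n := mul_pow _ _ _
    have h4u := one_add_pow_le (norm_nonneg u) n
    have h4v := one_add_pow_le (norm_nonneg v) n
    have h5 : (1 + ‖u‖) ^ n * (1 + ‖v‖) ^ n
        ≤ 4 ^ n * ((1 + ‖u‖ ^ n) * (1 + ‖v‖ ^ n)) := by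
      have e4 : (4:ℝ) ^ n = 2 ^ n * 2 ^ n := by rw [← mul_pow]; norm_num
      have := mul_le_mul h4u h4v (by positivity) (by positivity)
      calc (1 + ‖u‖) ^ n * (1 + ‖v‖) ^ n
          ≤ (2 ^ n * (1 + ‖u‖ ^ n)) * (2 ^ n * (1 + ‖v‖ ^ n)) := this
        _ = 4 ^ n * ((1 + ‖u‖ ^ n) * (1 + ‖v‖ ^ n)) := by rw [e4]; ring
    have h6 : (1:ℝ) ≤ (1 + ‖u‖ ^ n) * (1 + ‖v‖ ^ n) := by
      nlinarith [pow_nonneg (norm_nonneg u) n, pow_nonneg (norm_nonneg v) n,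
        mul_nonneg (pow_nonneg (norm_nonneg u) n) (pow_nonneg (norm_nonneg v) n)]
    calc |f (c • u + s • v)| ≤ C₀ * (1 + ‖c • u + s • v‖ ^ n) := hgrow _
      _ ≤ C₀ * (1 + 4 ^ n * ((1 + ‖u‖ ^ n) * (1 + ‖v‖ ^ n))) := by
          apply mul_le_mul_of_nonneg_left _ hC₀
          have := h1.trans (h3.trans h5)
          linarith
      _ ≤ C₄ * ((1 + ‖u‖ ^ n) * (1 + ‖v‖ ^ n)) := by
          rw [hC₄def]
          nlinarith [pow_nonneg (show (0:ℝ) ≤ 4 by norm_num) n]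
  -- bound on P
  have hPble : ∀ w : (EuclideanSpace ℝ (Fin d)), |P w| ≤ C₄ * (1 + ‖w‖ ^ n) * Mn := by
    intro w
    rw [hPdef]
    simp only
    rw [← Real.norm_eq_abs]
    refine (norm_integral_le_of_norm_le (hMnint.const_mul (C₄ * (1 + ‖w‖ ^ n)))
      (Filter.Eventually.of_forall fun y => ?_)).trans ?_
    · rw [Real.norm_eq_abs, abs_mul, abs_of_nonneg (hφpos y)]
      calc |f (c • w + s • y)| * φ y
          ≤ (C₄ * ((1 + ‖w‖ ^ n) * (1 + ‖y‖ ^ n))) * φ y :=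
            mul_le_mul_of_nonneg_right (hfble w y) (hφpos y)
        _ = C₄ * (1 + ‖w‖ ^ n) * ((1 + ‖y‖ ^ n) * φ y) := by ring
    · rw [integral_const_mul, ← hMndef]
  -- integrability of g ↦ P g * φ g
  have hPmeas : AEStronglyMeasurable P (volume : Measure (EuclideanSpace ℝ (Fin d))) := by
    have hcont : Continuous (Function.uncurry fun g y : (EuclideanSpace ℝ (Fin d)) => f (c • g + s • y) * φ y) :=
      (hfc.comp ((continuous_fst.const_smul c).add (continuous_snd.const_smul s))).mul
        (hφc.comp continuous_snd)
    exact (hcont.stronglyMeasurable.integral_prod_right).aestronglyMeasurable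
  have hPφint : Integrable (fun g : (EuclideanSpace ℝ (Fin d)) => P g * φ g) := by
    refine (hMnint.const_mul (C₄ * Mn)).mono' (hPmeas.mul hφc.aestronglyMeasurable)
      (Filter.Eventually.of_forall fun g => ?_)
    rw [Real.norm_eq_abs, abs_mul, abs_of_nonneg (hφpos g)]
    calc |P g| * φ g ≤ (C₄ * (1 + ‖g‖ ^ n) * Mn) * φ g :=
          mul_le_mul_of_nonneg_right (hPble g) (hφpos g)
      _ = (C₄ * Mn) * ((1 + ‖g‖ ^ n) * φ g) := by ring
  -- the invariance identity : I₀ = ∫ g, P g * φ g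
  have hPg : ∀ g : (EuclideanSpace ℝ (Fin d)), P g = K * ∫ y, f (c • g + s • y) * rexp (-a * ‖y‖ ^ 2) := by
    intro g
    rw [hPdef]
    simp only
    calc ∫ y, f (c • g + s • y) * φ y
        = ∫ y, K * (f (c • g + s • y) * rexp (-a * ‖y‖ ^ 2)) := by
          congr 1; funext y; rw [hφ' y]; ring
      _ = K * ∫ y, f (c • g + s • y) * rexp (-a * ‖y‖ ^ 2) := integral_const_mul _ _
  have hconv : I₀ = ∫ g, P g * φ g := by
    have h := conv_identity (d := d) hfc hgrow ha hc0 hs0 hcs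
    have e2 : ∫ g, P g * φ g
        = (K * K) * ∫ g, (∫ y, f (c • g + s • y) * rexp (-a * ‖y‖ ^ 2))
            * rexp (-a * ‖g‖ ^ 2) := by
      rw [← integral_const_mul]
      congr 1; funext g
      rw [hPg g, hφ' g]; ring
    have e3 : (K * K) * ((Real.pi / a) ^ ((d : ℝ) / 2) * ∫ z, f z * rexp (-a * ‖z‖ ^ 2))
        = K * ∫ z, f z * rexp (-a * ‖z‖ ^ 2) := by
      have : (K * K) * ((Real.pi / a) ^ ((d : ℝ) / 2) * ∫ z, f z * rexp (-a * ‖z‖ ^ 2))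
          = (K * (Real.pi / a) ^ ((d : ℝ) / 2)) * (K * ∫ z, f z * rexp (-a * ‖z‖ ^ 2)) := by
        ring
      rw [this, hKnorm, one_mul]
    have e4 : K * ∫ z, f z * rexp (-a * ‖z‖ ^ 2) = I₀ := by
      rw [hI₀def, ← integral_const_mul]
      congr 1; funext z
      rw [hφ' z]; ring
    rw [e2, h, e3, e4]
  -- P x = ∫ g, P x * φ g
  have hPx_eq : P x = ∫ g : (EuclideanSpace ℝ (Fin d)), P x * φ g := by
    rw [integral_const_mul, hφtot, mul_one]
  have hdiff_eq : P x - I₀ = ∫ g, (P x - P g) * φ g := by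
    calc P x - I₀ = (∫ g : (EuclideanSpace ℝ (Fin d)), P x * φ g) - ∫ g, P g * φ g := by
          rw [← hPx_eq, ← hconv]
      _ = ∫ g : (EuclideanSpace ℝ (Fin d)), (P x * φ g - P g * φ g) :=
          (integral_sub (hφint.const_mul (P x)) hPφint).symm
      _ = ∫ g : (EuclideanSpace ℝ (Fin d)), (P x - P g) * φ g := by congr 1; funext g; ring
  -- pointwise bound on P x - P g using the mean value theorem
  have hPdiff : ∀ g : (EuclideanSpace ℝ (Fin d)), |P x - P g|
      ≤ C₂ * ((1 + ‖x‖ ^ m) * (1 + ‖g‖ ^ m)) * c * Mm := by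
    intro g
    have heq : P x - P g = ∫ y, (f (c • x + s • y) - f (c • g + s • y)) * φ y := by
      calc P x - P g
          = (∫ y, f (c • x + s • y) * φ y) - ∫ y, f (c • g + s • y) * φ y := rfl
        _ = ∫ y, (f (c • x + s • y) * φ y - f (c • g + s • y) * φ y) :=
            (integral_sub (hint1 x) (hint1 g)).symm
        _ = ∫ y, (f (c • x + s • y) - f (c • g + s • y)) * φ y := by
            congr 1; funext y; ring
    rw [heq, ← Real.norm_eq_abs]
    refine (norm_integral_le_of_norm_le
      (hMmint.const_mul (C₂ * ((1 + ‖x‖ ^ m) * (1 + ‖g‖ ^ m)) * c))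
      (Filter.Eventually.of_forall fun y => ?_)).trans ?_
    · rw [Real.norm_eq_abs, abs_mul, abs_of_nonneg (hφpos y)]
      have hkey := mvt_bound hf1 hC₁ hgrad hc0.le hc1.le hs0.le hs1 x g y
      calc |f (c • x + s • y) - f (c • g + s • y)| * φ y
          ≤ ((C₁ * (2 * 8 ^ (n₁ + 1))) *
              ((1 + ‖x‖ ^ (n₁ + 1)) * ((1 + ‖y‖ ^ (n₁ + 1)) * (1 + ‖g‖ ^ (n₁ + 1)))) * c)
              * φ y := mul_le_mul_of_nonneg_right hkey (hφpos y)
        _ = C₂ * ((1 + ‖x‖ ^ m) * (1 + ‖g‖ ^ m)) * c * ((1 + ‖y‖ ^ m) * φ y) := by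
            rw [hC₂def, hmdef]; ring
    · rw [integral_const_mul, ← hMmdef]
  -- final estimate
  rw [heq1, hdiff_eq, ← Real.norm_eq_abs]
  have hx0 : (0:ℝ) ≤ 1 + ‖x‖ ^ m := by positivity
  refine (norm_integral_le_of_norm_le
    (hMmint.const_mul (C₂ * (1 + ‖x‖ ^ m) * c * Mm))
    (Filter.Eventually.of_forall fun g => ?_)).trans ?_
  · rw [Real.norm_eq_abs, abs_mul, abs_of_nonneg (hφpos g)]
    calc |P x - P g| * φ g
        ≤ (C₂ * ((1 + ‖x‖ ^ m) * (1 + ‖g‖ ^ m)) * c * Mm) * φ g :=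
          mul_le_mul_of_nonneg_right (hPdiff g) (hφpos g)
      _ = (C₂ * (1 + ‖x‖ ^ m) * c * Mm) * ((1 + ‖g‖ ^ m) * φ g) := by ring
  · rw [integral_const_mul, ← hMmdef]
    have hfin : C₂ * (1 + ‖x‖ ^ m) * c * Mm * Mm
        ≤ (C₂ * Mm * Mm + 1) * (1 + ‖x‖ ^ m) * c := by
      have h1 : (0:ℝ) ≤ (1 + ‖x‖ ^ m) * c := mul_nonneg hx0 hc0.le
      nlinarith [mul_nonneg (mul_nonneg hC₂ hMm0) hMm0]
    exact hfin
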